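/- For every t ∈ ℕ, the curve γ_t: [0,1] → S^1 × S^1 ⊂ ℝ^4, γ_t(s) = (cos 2π(t+1)s, sin 2π(t+1)s, cos 2πs, sin 2πs), is a t-design curve on the Clifford torus: for every polynomial f on ℝ^4 of degree at most t, (1/ℓ(γ_t)) ∫_0^1 f(γ_t(s)) |γ_t'(s)| ds equals the average of f over S^1 × S^1 with respect to the product of arc-length measures. Moreover ℓ(γ_t) = 2π√((t+1)^2 + 1). -/

import Mathlib

open Real MvPolynomial

/-- The curve `γ_t(s) = (cos 2π(t+1)s, sin 2π(t+1)s, cos 2πs, sin 2πs)` on the Clifford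
torus `S¹ × S¹ ⊂ ℝ⁴`. -/
noncomputable def torusCurve (t : ℕ) (s : ℝ) : EuclideanSpace ℝ (Fin 4) :=
  (WithLp.equiv 2 (Fin 4 → ℝ)).symm
    ![Real.cos (2 * π * (t + 1) * s), Real.sin (2 * π * (t + 1) * s),
      Real.cos (2 * π * s), Real.sin (2 * π * s)]

open Complex

noncomputable section AuxDesign


def tc (a b j l : ℕ) : ℂ :=
  (a.choose j : ℂ) * (b.choose l) * (-1)^l * Complex.I^b / 2^(a+b)

def tf (a b j l : ℕ) : ℤ := 2*(j+l) - (a+b)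

lemma trig_expand (a b : ℕ) (θ : ℝ) :
    (Real.cos θ : ℂ)^a * (Real.sin θ : ℂ)^b
      = ∑ j ∈ Finset.range (a+1), ∑ l ∈ Finset.range (b+1),
          tc a b j l * Complex.exp ((tf a b j l : ℂ) * θ * Complex.I) := by
  set E : ℤ → ℂ := fun k => Complex.exp ((k : ℂ) * θ * Complex.I) with hE
  have hEadd : ∀ k m : ℤ, E k * E m = E (k + m) := by
    intro k m
    simp only [hE, ← Complex.exp_add]
    congr 1
    push_cast
    ring
  have hEpow : ∀ (k : ℤ) (n : ℕ), E k ^ n = E (k * n) := by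
    intro k n
    simp only [hE, ← Complex.exp_nat_mul]
    congr 1
    push_cast
    ring
  have hc : (Real.cos θ : ℂ) = (E 1 + E (-1))/2 := by
    rw [Complex.ofReal_cos, eq_div_iff (two_ne_zero' ℂ), mul_comm, Complex.two_cos]
    simp only [hE]; push_cast; ring_nf
  have hs : (Real.sin θ : ℂ) = (E (-1) - E 1) * Complex.I / 2 := by
    rw [Complex.ofReal_sin, eq_div_iff (two_ne_zero' ℂ), mul_comm, Complex.two_sin]
    simp only [hE]; push_cast; ring_nf
  have h1 : (E 1 + E (-1))^a
      = ∑ j ∈ Finset.range (a+1), (a.choose j : ℂ) * E (2*j - a) := by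
    rw [add_pow]
    refine Finset.sum_congr rfl fun j hj => ?_
    simp only [Finset.mem_range, Nat.lt_succ_iff] at hj
    rw [hEpow, hEpow, hEadd]
    rw [mul_comm]
    congr 2
    push_cast [Nat.cast_sub hj]
    ring
  have h2 : (E (-1) - E 1)^b
      = ∑ l ∈ Finset.range (b+1), (b.choose l : ℂ) * (-1)^l * E (2*l - b) := by
    rw [sub_eq_add_neg, add_comm, add_pow]
    refine Finset.sum_congr rfl fun l hl => ?_
    simp only [Finset.mem_range, Nat.lt_succ_iff] at hl
    rw [neg_pow, hEpow, hEpow]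
    rw [show ∀ x y : ℂ, (-1:ℂ)^l * x * y * (b.choose l : ℂ) = (b.choose l : ℂ) * (-1)^l * (x*y)  from fun x y => by ring]
    rw [hEadd]
    congr 2
    push_cast [Nat.cast_sub hl]
    ring
  rw [hc, hs, div_pow, div_pow, mul_pow, div_mul_div_comm, ← pow_add, h1, h2]
  rw [show ∀ x y : ℂ, x * (y * Complex.I ^ b) / 2 ^ (a+b) = (x * y) * (Complex.I ^ b / 2 ^ (a+b)) from fun x y => by ring]
  rw [Finset.sum_mul_sum]
  rw [Finset.sum_mul]
  refine Finset.sum_congr rfl fun j hj => ?_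
  rw [Finset.sum_mul]
  refine Finset.sum_congr rfl fun l hl => ?_
  rw [tc, tf]
  rw [show ∀ x y : ℂ, (a.choose j : ℂ) * x * ((b.choose l : ℂ) * (-1)^l * y) * (Complex.I^b / 2^(a+b)) = ((a.choose j : ℂ) * (b.choose l) * (-1)^l * Complex.I^b / 2^(a+b)) * (x * y) from fun x y => by ring]
  rw [hEadd]
  congr 2
  · ring


lemma exp_integral_01 (k : ℤ) :
    (∫ s in (0:ℝ)..1, Complex.exp ((k:ℂ) * (2*π*s) * Complex.I)) = if k = 0 then 1 else 0 := by
  rcases eq_or_ne k 0 with h | h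
  · simp [h]
  · rw [if_neg h]
    have hc : ((k:ℂ) * (2*π) * Complex.I) ≠ 0 := by
      simp [Complex.I_ne_zero, Real.pi_ne_zero, Complex.ofReal_ne_zero, h]
    have heq : ∀ s : ℝ, Complex.exp ((k:ℂ) * (2*π*s) * Complex.I)
        = Complex.exp (((k:ℂ) * (2*π) * Complex.I) * s) := by
      intro s; congr 1; ring
    rw [intervalIntegral.integral_congr (g := fun s : ℝ => Complex.exp (((k:ℂ) * (2*π) * Complex.I) * s)) (fun s _ => heq s)]
    rw [integral_exp_mul_complex hc]
    have h1 : ((k:ℂ) * (2*π) * Complex.I) * (1:ℝ) = k * (2*π*Complex.I) := by push_cast; ring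
    have h0 : ((k:ℂ) * (2*π) * Complex.I) * (0:ℝ) = 0 := by push_cast; ring
    rw [h1, h0, Complex.exp_int_mul_two_pi_mul_I, Complex.exp_zero, sub_self, zero_div]

lemma exp_integral_2pi (k : ℤ) :
    (∫ θ in (0:ℝ)..(2*π), Complex.exp ((k:ℂ) * θ * Complex.I)) = if k = 0 then ((2*π:ℝ):ℂ) else 0 := by
  rcases eq_or_ne k 0 with h | h
  · simp [h]
  · rw [if_neg h]
    have hc : ((k:ℂ) * Complex.I) ≠ 0 := by
      simp [Complex.I_ne_zero, h]
    have heq : ∀ θ : ℝ, Complex.exp ((k:ℂ) * θ * Complex.I)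
        = Complex.exp (((k:ℂ) * Complex.I) * θ) := by
      intro θ; congr 1; ring
    rw [intervalIntegral.integral_congr (g := fun θ : ℝ => Complex.exp (((k:ℂ) * Complex.I) * θ)) (fun θ _ => heq θ)]
    rw [integral_exp_mul_complex hc]
    have h1 : ((k:ℂ) * Complex.I) * ((2*π:ℝ):ℂ) = k * (2*π*Complex.I) := by push_cast; ring
    have h0 : ((k:ℂ) * Complex.I) * ((0:ℝ):ℂ) = 0 := by push_cast; ring
    rw [h1, h0, Complex.exp_int_mul_two_pi_mul_I, Complex.exp_zero, sub_self, zero_div]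

lemma trig_expand' (a b : ℕ) (θ : ℝ) :
    (Real.cos θ : ℂ)^a * (Real.sin θ : ℂ)^b
      = ∑ p ∈ Finset.range (a+1) ×ˢ Finset.range (b+1),
          tc a b p.1 p.2 * Complex.exp ((tf a b p.1 p.2 : ℂ) * θ * Complex.I) := by
  rw [Finset.sum_product]; exact trig_expand a b θ

def S (a b : ℕ) : ℂ :=
  ∑ p ∈ Finset.range (a+1) ×ˢ Finset.range (b+1),
      tc a b p.1 p.2 * (if tf a b p.1 p.2 = 0 then 1 else 0)

lemma tf_abs_le {a b : ℕ} {j : ℕ × ℕ} (hj : j ∈ Finset.range (a+1) ×ˢ Finset.range (b+1)) :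
    |tf a b j.1 j.2| ≤ ((a + b : ℕ) : ℤ) := by
  obtain ⟨h1, h2⟩ := Finset.mem_product.mp hj
  simp only [Finset.mem_range, Nat.lt_succ_iff] at h1 h2
  rw [tf, abs_le]
  push_cast
  omega

lemma freq_vanish (t : ℕ) {m₁ m₂ : ℕ} (hm : m₁ + m₂ ≤ t) (k₁ k₂ : ℤ)
    (h1 : |k₁| ≤ (m₁:ℤ)) (h2 : |k₂| ≤ (m₂:ℤ)) :
    ((t+1:ℤ) * k₁ + k₂ = 0) ↔ (k₁ = 0 ∧ k₂ = 0) := by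
  constructor
  · intro h
    by_cases hk : k₁ = 0
    · refine ⟨hk, ?_⟩
      rw [hk] at h; simpa using h
    · exfalso
      have ha1 : 1 ≤ |k₁| := Int.one_le_abs (by simpa using hk)
      have hk2 : k₂ = -((t+1:ℤ) * k₁) := by linarith
      have habs : |k₂| = (t+1:ℤ) * |k₁| := by
        rw [hk2, abs_neg, abs_mul, abs_of_nonneg (by positivity : (0:ℤ) ≤ (t+1:ℤ))]
      have : (t+1:ℤ) ≤ |k₂| := by
        rw [habs]; nlinarith
      have hmt : (m₂ : ℤ) ≤ t := by exact_mod_cast le_trans (Nat.le_add_left _ _) hm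
      linarith
  · rintro ⟨h1, h2⟩; simp [h1, h2]

lemma term_cont (m : ℤ) (c : ℂ) :
    Continuous fun s : ℝ => c * Complex.exp ((m:ℂ) * (2*π*s) * Complex.I) := by
  fun_prop

lemma curve_integral (t a b c d : ℕ) (hdeg : a + b + c + d ≤ t) :
    Complex.ofReal (∫ s in (0:ℝ)..1, Real.cos (2*π*(t+1)*s)^a * Real.sin (2*π*(t+1)*s)^b *
        Real.cos (2*π*s)^c * Real.sin (2*π*s)^d) = S a b * S c d := by
  rw [← intervalIntegral.integral_ofReal]
  have hcong : ∀ s : ℝ, ((Real.cos (2*π*(t+1)*s)^a * Real.sin (2*π*(t+1)*s)^b *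
        Real.cos (2*π*s)^c * Real.sin (2*π*s)^d : ℝ) : ℂ)
      = ∑ p ∈ Finset.range (a+1) ×ˢ Finset.range (b+1),
          ∑ q ∈ Finset.range (c+1) ×ˢ Finset.range (d+1),
            (tc a b p.1 p.2 * tc c d q.1 q.2) *
              Complex.exp ((((t+1:ℤ) * tf a b p.1 p.2 + tf c d q.1 q.2 : ℤ) : ℂ)
                * (2*π*s) * Complex.I) := by
    intro s
    simp only [Complex.ofReal_mul, Complex.ofReal_pow]
    rw [show ∀ w x y z : ℂ, w^a * x^b * y^c * z^d = (w^a * x^b) * (y^c * z^d) from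
      fun w x y z => by ring]
    rw [trig_expand' a b (2*π*(t+1)*s), trig_expand' c d (2*π*s), Finset.sum_mul_sum]
    refine Finset.sum_congr rfl fun p hp => Finset.sum_congr rfl fun q hq => ?_
    rw [show ∀ x y u v : ℂ, x * u * (y * v) = (x * y) * (u * v) from fun x y u v => by ring,
      ← Complex.exp_add]
    congr 2
    push_cast
    ring
  rw [intervalIntegral.integral_congr (fun s _ => hcong s)]
  rw [intervalIntegral.integral_finset_sum (fun p _ => ?_)]
  swap
  · exact (continuous_finset_sum _ fun q _ => term_cont _ _).intervalIntegrable _ _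
  rw [show S a b * S c d = ∑ p ∈ Finset.range (a+1) ×ˢ Finset.range (b+1),
      ∑ q ∈ Finset.range (c+1) ×ˢ Finset.range (d+1),
        (tc a b p.1 p.2 * tc c d q.1 q.2) *
          ((if tf a b p.1 p.2 = 0 then 1 else 0) * (if tf c d q.1 q.2 = 0 then 1 else 0)) by
    rw [S, S, Finset.sum_mul_sum]
    exact Finset.sum_congr rfl fun p _ => Finset.sum_congr rfl fun q _ => by ring]
  refine Finset.sum_congr rfl fun p hp => ?_
  rw [intervalIntegral.integral_finset_sum (fun q _ => (term_cont _ _).intervalIntegrable _ _)]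
  refine Finset.sum_congr rfl fun q hq => ?_
  rw [intervalIntegral.integral_const_mul, exp_integral_01]
  congr 1
  rw [if_congr (freq_vanish t (m₁ := a+b) (m₂ := c+d) (by omega) _ _ (tf_abs_le hp) (tf_abs_le hq)) rfl rfl]
  by_cases h1 : tf a b p.1 p.2 = 0 <;> by_cases h2 : tf c d q.1 q.2 = 0 <;>
    simp [h1, h2]

lemma term_cont2 (m : ℤ) (c : ℂ) :
    Continuous fun θ : ℝ => c * Complex.exp ((m:ℂ) * θ * Complex.I) := by
  fun_prop

lemma circle_integral (a b : ℕ) :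
    Complex.ofReal (∫ θ in (0:ℝ)..(2*π), Real.cos θ^a * Real.sin θ^b)
      = 2*π * S a b := by
  rw [← intervalIntegral.integral_ofReal]
  have hcong : ∀ θ : ℝ, ((Real.cos θ^a * Real.sin θ^b : ℝ) : ℂ)
      = ∑ p ∈ Finset.range (a+1) ×ˢ Finset.range (b+1),
          tc a b p.1 p.2 * Complex.exp ((tf a b p.1 p.2 : ℂ) * θ * Complex.I) := by
    intro θ
    simp only [Complex.ofReal_mul, Complex.ofReal_pow]
    exact trig_expand' a b θ
  rw [intervalIntegral.integral_congr (fun θ _ => hcong θ)]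
  rw [intervalIntegral.integral_finset_sum
    (fun p _ => (term_cont2 _ _).intervalIntegrable _ _)]
  rw [S, Finset.mul_sum]
  refine Finset.sum_congr rfl fun p hp => ?_
  rw [intervalIntegral.integral_const_mul, exp_integral_2pi]
  by_cases h : tf a b p.1 p.2 = 0 <;> simp [h] <;> ring

lemma mono_eq (t a b c d : ℕ) (hdeg : a + b + c + d ≤ t) :
    (∫ s in (0:ℝ)..1, Real.cos (2*π*(t+1)*s)^a * Real.sin (2*π*(t+1)*s)^b *
        Real.cos (2*π*s)^c * Real.sin (2*π*s)^d)
      = (1/(2*π)^2) * ((∫ θ in (0:ℝ)..(2*π), Real.cos θ^a * Real.sin θ^b) *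
          (∫ θ in (0:ℝ)..(2*π), Real.cos θ^c * Real.sin θ^d)) := by
  apply Complex.ofReal_injective
  rw [curve_integral t a b c d hdeg]
  rw [Complex.ofReal_mul, Complex.ofReal_mul, circle_integral, circle_integral]
  have hπ : ((π:ℂ)) ≠ 0 := by exact_mod_cast Complex.ofReal_ne_zero.mpr Real.pi_ne_zero
  push_cast
  field_simp

open MvPolynomial in
lemma poly_curve (t : ℕ) (f : MvPolynomial (Fin 4) ℝ) (hf : f.totalDegree ≤ t) :
    (∫ s in (0:ℝ)..1, eval ![Real.cos (2*π*(t+1)*s), Real.sin (2*π*(t+1)*s),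
        Real.cos (2*π*s), Real.sin (2*π*s)] f)
      = (1 / (2*π)^2) * ∫ θ₁ in (0:ℝ)..(2*π), ∫ θ₂ in (0:ℝ)..(2*π),
          eval ![Real.cos θ₁, Real.sin θ₁, Real.cos θ₂, Real.sin θ₂] f := by
  have hbound : ∀ d ∈ f.support, d 0 + d 1 + d 2 + d 3 ≤ t := by
    intro d hd
    have h1 : d.sum (fun _ e => e) ≤ f.totalDegree := MvPolynomial.le_totalDegree hd
    have h2 : d.sum (fun _ e => e) = d 0 + d 1 + d 2 + d 3 := by
      rw [Finsupp.sum_fintype _ _ (fun _ => rfl), Fin.sum_univ_four]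
    omega
  have heval : ∀ w x y z : ℝ, eval ![w,x,y,z] f
      = ∑ d ∈ f.support, coeff d f * (w ^ d 0 * x ^ d 1 * y ^ d 2 * z ^ d 3) := by
    intro w x y z
    rw [eval_eq']
    refine Finset.sum_congr rfl fun d _ => ?_
    rw [Fin.prod_univ_four]
    simp [mul_assoc]
  -- LHS
  have hL : (∫ s in (0:ℝ)..1, eval ![Real.cos (2*π*(t+1)*s), Real.sin (2*π*(t+1)*s),
        Real.cos (2*π*s), Real.sin (2*π*s)] f)
      = ∑ d ∈ f.support, coeff d f * ((1/(2*π)^2) *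
          ((∫ θ in (0:ℝ)..(2*π), Real.cos θ^(d 0) * Real.sin θ^(d 1)) *
           (∫ θ in (0:ℝ)..(2*π), Real.cos θ^(d 2) * Real.sin θ^(d 3)))) := by
    rw [intervalIntegral.integral_congr (g := fun s => ∑ d ∈ f.support,
      coeff d f * (Real.cos (2*π*(t+1)*s) ^ d 0 * Real.sin (2*π*(t+1)*s) ^ d 1 *
        Real.cos (2*π*s) ^ d 2 * Real.sin (2*π*s) ^ d 3)) (fun s _ => heval _ _ _ _)]
    rw [intervalIntegral.integral_finset_sum (fun d _ =>
      ((by fun_prop : Continuous fun s : ℝ => coeff d f *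
        (Real.cos (2*π*(t+1)*s) ^ d 0 * Real.sin (2*π*(t+1)*s) ^ d 1 *
          Real.cos (2*π*s) ^ d 2 * Real.sin (2*π*s) ^ d 3))).intervalIntegrable _ _)]
    refine Finset.sum_congr rfl fun d hd => ?_
    rw [intervalIntegral.integral_const_mul, mono_eq t _ _ _ _ (hbound d hd)]
  -- inner integral on RHS
  have hinner : ∀ θ₁ : ℝ, (∫ θ₂ in (0:ℝ)..(2*π),
        eval ![Real.cos θ₁, Real.sin θ₁, Real.cos θ₂, Real.sin θ₂] f)
      = ∑ d ∈ f.support, (coeff d f * (Real.cos θ₁ ^ d 0 * Real.sin θ₁ ^ d 1)) *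
          (∫ θ₂ in (0:ℝ)..(2*π), Real.cos θ₂ ^ d 2 * Real.sin θ₂ ^ d 3) := by
    intro θ₁
    rw [intervalIntegral.integral_congr (g := fun θ₂ => ∑ d ∈ f.support,
      (coeff d f * (Real.cos θ₁ ^ d 0 * Real.sin θ₁ ^ d 1)) *
        (Real.cos θ₂ ^ d 2 * Real.sin θ₂ ^ d 3))
      (fun θ₂ _ => by rw [heval]; exact Finset.sum_congr rfl fun d _ => by ring)]
    rw [intervalIntegral.integral_finset_sum (fun d _ =>
      ((by fun_prop : Continuous fun θ₂ : ℝ => (coeff d f *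
        (Real.cos θ₁ ^ d 0 * Real.sin θ₁ ^ d 1)) *
          (Real.cos θ₂ ^ d 2 * Real.sin θ₂ ^ d 3))).intervalIntegrable _ _)]
    exact Finset.sum_congr rfl fun d _ => intervalIntegral.integral_const_mul _ _
  -- outer integral on RHS
  have hR : (∫ θ₁ in (0:ℝ)..(2*π), ∫ θ₂ in (0:ℝ)..(2*π),
        eval ![Real.cos θ₁, Real.sin θ₁, Real.cos θ₂, Real.sin θ₂] f)
      = ∑ d ∈ f.support, coeff d f *
          ((∫ θ in (0:ℝ)..(2*π), Real.cos θ^(d 0) * Real.sin θ^(d 1)) *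
           (∫ θ in (0:ℝ)..(2*π), Real.cos θ^(d 2) * Real.sin θ^(d 3))) := by
    rw [intervalIntegral.integral_congr (g := fun θ₁ => ∑ d ∈ f.support,
      (coeff d f * (∫ θ₂ in (0:ℝ)..(2*π), Real.cos θ₂ ^ d 2 * Real.sin θ₂ ^ d 3)) *
        (Real.cos θ₁ ^ d 0 * Real.sin θ₁ ^ d 1))
      (fun θ₁ _ => by rw [hinner]; exact Finset.sum_congr rfl fun d _ => by ring)]
    rw [intervalIntegral.integral_finset_sum (fun d _ =>
      ((by fun_prop : Continuous fun θ₁ : ℝ => (coeff d f *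
        (∫ θ₂ in (0:ℝ)..(2*π), Real.cos θ₂ ^ d 2 * Real.sin θ₂ ^ d 3)) *
          (Real.cos θ₁ ^ d 0 * Real.sin θ₁ ^ d 1))).intervalIntegrable _ _)]
    refine Finset.sum_congr rfl fun d _ => ?_
    rw [intervalIntegral.integral_const_mul]
    ring
  rw [hL, hR, Finset.mul_sum]
  exact Finset.sum_congr rfl fun d _ => by ring


end AuxDesign

noncomputable section AuxDesign2

lemma torusCurve_hasDerivAt (t : ℕ) (s : ℝ) :
    HasDerivAt (torusCurve t)
      ((WithLp.equiv 2 (Fin 4 → ℝ)).symm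
        ![-Real.sin (2 * π * (t + 1) * s) * (2 * π * (t + 1)),
          Real.cos (2 * π * (t + 1) * s) * (2 * π * (t + 1)),
          -Real.sin (2 * π * s) * (2 * π),
          Real.cos (2 * π * s) * (2 * π)]) s := by
  have hlin1 : HasDerivAt (fun s : ℝ => 2 * π * (t + 1) * s) (2 * π * (t + 1)) s := by
    simpa using (hasDerivAt_id s).const_mul (2 * π * ((t:ℝ) + 1))
  have hlin2 : HasDerivAt (fun s : ℝ => 2 * π * s) (2 * π) s := by
    simpa using (hasDerivAt_id s).const_mul (2 * π)
  have hg : HasDerivAt (fun s : ℝ => (![Real.cos (2 * π * (t + 1) * s),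
      Real.sin (2 * π * (t + 1) * s), Real.cos (2 * π * s), Real.sin (2 * π * s)] : Fin 4 → ℝ))
      (![-Real.sin (2 * π * (t + 1) * s) * (2 * π * (t + 1)),
        Real.cos (2 * π * (t + 1) * s) * (2 * π * (t + 1)),
        -Real.sin (2 * π * s) * (2 * π),
        Real.cos (2 * π * s) * (2 * π)]) s := by
    rw [hasDerivAt_pi]
    intro i
    fin_cases i
    · exact hlin1.cos
    · exact hlin1.sin
    · exact hlin2.cos
    · exact hlin2.sin
  exact ((PiLp.continuousLinearEquiv 2 ℝ (fun _ : Fin 4 => ℝ)).symm.toContinuousLinearMap.hasFDerivAt).comp_hasDerivAt s hg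

lemma torusCurve_norm_deriv (t : ℕ) (s : ℝ) :
    ‖deriv (torusCurve t) s‖ = 2 * π * Real.sqrt (((t:ℝ) + 1) ^ 2 + 1) := by
  rw [(torusCurve_hasDerivAt t s).deriv]
  rw [EuclideanSpace.norm_eq]
  have h4 : ∀ (v : Fin 4 → ℝ), (∑ i, ‖((WithLp.equiv 2 (Fin 4 → ℝ)).symm v) i‖ ^ 2)
      = v 0 ^ 2 + v 1 ^ 2 + v 2 ^ 2 + v 3 ^ 2 := by
    intro v
    rw [Fin.sum_univ_four]
    simp [Real.norm_eq_abs, sq_abs]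
  rw [h4]
  rw [show 2 * π * Real.sqrt (((t:ℝ)+1)^2+1)
      = Real.sqrt ((2*π)^2 * (((t:ℝ)+1)^2+1)) by
    rw [Real.sqrt_mul (sq_nonneg _), Real.sqrt_sq (by positivity : (0:ℝ) ≤ 2*π)]]
  congr 1
  simp [Matrix.cons_val_two, Matrix.cons_val_three]
  have h1 := Real.sin_sq_add_cos_sq (2 * π * ((t:ℝ) + 1) * s)
  have h2 := Real.sin_sq_add_cos_sq (2 * π * s)
  nlinarith [h1, h2]



end AuxDesign2

/-- `γ_t` is a `t`-design curve on the Clifford torus: the normalized line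
integral of every polynomial on `ℝ⁴` of degree at most `t` equals its average over
`S¹ × S¹` with respect to the product of arc-length measures; moreover
`ℓ(γ_t) = 2π√((t+1)² + 1)`. -/
theorem torusCurve_is_design (t : ℕ) :
    (∀ f : MvPolynomial (Fin 4) ℝ, f.totalDegree ≤ t →
      (∫ s in (0:ℝ)..1, ‖deriv (torusCurve t) s‖)⁻¹ *
          ∫ s in (0:ℝ)..1, eval (WithLp.equiv 2 (Fin 4 → ℝ) (torusCurve t s)) f *
            ‖deriv (torusCurve t) s‖ =
        (1 / (2 * π) ^ 2) * ∫ θ₁ in (0:ℝ)..(2 * π), ∫ θ₂ in (0:ℝ)..(2 * π),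
          eval ![Real.cos θ₁, Real.sin θ₁, Real.cos θ₂, Real.sin θ₂] f) ∧
    (∫ s in (0:ℝ)..1, ‖deriv (torusCurve t) s‖) =
      2 * π * Real.sqrt ((t + 1) ^ 2 + 1) := by
  set L : ℝ := 2 * π * Real.sqrt (((t:ℝ) + 1) ^ 2 + 1) with hLdef
  have hnorm : ∀ s : ℝ, ‖deriv (torusCurve t) s‖ = L := fun s => torusCurve_norm_deriv t s
  have hlen : (∫ s in (0:ℝ)..1, ‖deriv (torusCurve t) s‖) = L := by
    rw [intervalIntegral.integral_congr (g := fun _ => L) (fun s _ => hnorm s)]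
    simp
  have hL : L ≠ 0 := by
    have : 0 < L := by
      apply mul_pos (by positivity)
      exact Real.sqrt_pos.mpr (by positivity)
    linarith
  refine ⟨?_, hlen⟩
  intro f hf
  have heval : ∀ s : ℝ, MvPolynomial.eval (WithLp.equiv 2 (Fin 4 → ℝ) (torusCurve t s)) f
      = MvPolynomial.eval ![Real.cos (2 * π * (t + 1) * s), Real.sin (2 * π * (t + 1) * s),
          Real.cos (2 * π * s), Real.sin (2 * π * s)] f := by
    intro s
    rw [torusCurve, Equiv.apply_symm_apply]
  rw [hlen]
  rw [intervalIntegral.integral_congr (g := fun s =>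
    MvPolynomial.eval ![Real.cos (2 * π * (t + 1) * s), Real.sin (2 * π * (t + 1) * s),
      Real.cos (2 * π * s), Real.sin (2 * π * s)] f * L)
    (fun s _ => by rw [heval, hnorm])]
  rw [intervalIntegral.integral_mul_const]
  rw [show L⁻¹ * ((∫ s in (0:ℝ)..1,
      MvPolynomial.eval ![Real.cos (2 * π * (t + 1) * s), Real.sin (2 * π * (t + 1) * s),
        Real.cos (2 * π * s), Real.sin (2 * π * s)] f) * L)
    = ∫ s in (0:ℝ)..1,
      MvPolynomial.eval ![Real.cos (2 * π * (t + 1) * s), Real.sin (2 * π * (t + 1) * s),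
        Real.cos (2 * π * s), Real.sin (2 * π * s)] f from by field_simp]
  exact poly_curve t f hf
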